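/- Let A be a commutative Noetherian ring and let I be a reflexive ideal of A with grade_A(tr_A(I)) ≥ 2, where tr_A(I) is the trace ideal of I. Then I contains a nonzerodivisor of A and (I : I) = A. -/

import Mathlib

set_option maxHeartbeats 1000000
set_option synthInstance.maxHeartbeats 400000

open CategoryTheory

universe u

/-- The `i`-th Ext module `Ext_A^i(M, N)` over a commutative ring `A`. -/
noncomputable def ExtModule (A : Type u) [CommRing A] (M N : Type u)
    [AddCommGroup M] [Module A M] [AddCommGroup N] [Module A N] (i : ℕ) : ModuleCat.{u} A :=
  ((Ext A (ModuleCat.{u} A) i).obj (Opposite.op (ModuleCat.of A M))).obj (ModuleCat.of A N)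

/-- A module is torsion-free if nonzerodivisors of the ring act injectively. -/
def IsTorsionFreeModule (A : Type*) [CommRing A] (M : Type*) [AddCommGroup M]
    [Module A M] : Prop :=
  ∀ a ∈ nonZeroDivisors A, ∀ m : M, a • m = 0 → m = 0

/-- The grade of an ideal `J`: the length of a maximal regular sequence contained in `J`. -/
noncomputable def Ideal.grade {A : Type*} [CommRing A] (J : Ideal A) : ℕ∞ :=
  sSup {n : ℕ∞ | ∃ rs : List A, (rs.length : ℕ∞) = n ∧ (∀ r ∈ rs, r ∈ J) ∧
    RingTheory.Sequence.IsWeaklyRegular A rs}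

/-- A Cohen–Macaulay local ring: Noetherian local with depth equal to Krull dimension. -/
def IsCohenMacaulayLocalRing (A : Type*) [CommRing A] : Prop :=
  IsNoetherianRing A ∧ ∃ _ : IsLocalRing A,
    ((IsLocalRing.maximalIdeal A).grade : WithBot ℕ∞) = ringKrullDim A

/-- A Cohen–Macaulay ring: Noetherian, all localizations at primes are CM local rings. -/
def IsCohenMacaulayRing (A : Type*) [CommRing A] : Prop :=
  IsNoetherianRing A ∧ ∀ (p : Ideal A) [p.IsPrime],
    IsCohenMacaulayLocalRing (Localization.AtPrime p)

/-- A Gorenstein local ring: Noetherian local of finite self-injective dimension,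
expressed via vanishing of `Ext^{n+1}(A/I, A)` for all ideals `I` (Baer's criterion). -/
def IsGorensteinLocalRing (A : Type u) [CommRing A] : Prop :=
  IsLocalRing A ∧ IsNoetherianRing A ∧
    ∃ n : ℕ, ∀ I : Ideal A, Subsingleton (ExtModule A (A ⧸ I) A (n + 1))

/-- A Gorenstein ring: Noetherian, all localizations at maximal ideals are Gorenstein local. -/
def IsGorensteinRing (A : Type u) [CommRing A] : Prop :=
  IsNoetherianRing A ∧ ∀ (m : Ideal A) [m.IsMaximal],
    IsGorensteinLocalRing (Localization.AtPrime m)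

/-- Generically Gorenstein: the localization at every associated prime is Gorenstein. -/
def IsGenericallyGorenstein (A : Type u) [CommRing A] : Prop :=
  ∀ (p : Ideal A) [p.IsPrime], p ∈ associatedPrimes A A →
    IsGorensteinLocalRing (Localization.AtPrime p)

/-- The trace ideal of a module: the sum of the images of all linear maps to the ring. -/
def traceIdeal (A : Type*) [CommRing A] (M : Type*) [AddCommGroup M] [Module A M] :
    Ideal A :=
  ⨆ f : M →ₗ[A] A, LinearMap.range f

/-- The image of an ideal inside the total ring of fractions. -/
noncomputable def Ideal.toFrac {A : Type u} [CommRing A] (I : Ideal A) :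
    Submodule A (FractionRing A) :=
  Submodule.map (Algebra.linearMap A (FractionRing A)) I

/-- The conductor `(R : S)` of a birational extension `R ⊆ S ⊆ Q(R)`,
as a submodule of the total ring of fractions. -/
noncomputable def conductorFrac (R : Type u) [CommRing R]
    (S : Subalgebra R (FractionRing R)) : Submodule R (FractionRing R) :=
  (1 : Submodule R (FractionRing R)) / Subalgebra.toSubmodule S

/-- `M ∈ Ω CM(A)`: there is an exact sequence `0 → M → P → N → 0` with `P` a finitely
generated projective `A`-module and `N` a finitely generated torsion-free
(equivalently, over a 1-dimensional CM ring, maximal Cohen–Macaulay) `A`-module. -/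
def InSyzygyOfCM (A : Type u) [CommRing A] (M : Type u) [AddCommGroup M] [Module A M] :
    Prop :=
  ∃ (P N : Type u) (_ : AddCommGroup P) (_ : Module A P) (_ : AddCommGroup N)
    (_ : Module A N), Module.Projective A P ∧ Module.Finite A P ∧ Module.Finite A N ∧
      IsTorsionFreeModule A N ∧
      ∃ (f : M →ₗ[A] P) (g : P →ₗ[A] N),
        Function.Injective f ∧ Function.Surjective g ∧ LinearMap.range f = LinearMap.ker g

section Aux

open Pointwise

/-- descent: if some power of `I` kills a nonzero element, `I` kills a nonzero element. -/
private lemma descend_ann {A : Type u} [CommRing A] (I : Ideal A) :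
    ∀ (n : ℕ) (x : A), x ≠ 0 → (∀ a ∈ I ^ n, a * x = 0) →
      ∃ z : A, z ≠ 0 ∧ ∀ a ∈ I, a * z = 0 := by
  intro n
  induction n with
  | zero =>
    intro x hx h
    exact absurd (by simpa using h 1 (by simp [Ideal.one_eq_top])) hx
  | succ n ih =>
    intro x hx h
    by_cases hc : ∀ a ∈ I, a * x = 0
    · exact ⟨x, hx, hc⟩
    · push_neg at hc
      obtain ⟨a, haI, hax⟩ := hc
      refine ih (a * x) hax fun b hb => ?_
      have hba : b * a ∈ I ^ (n + 1) := by
        rw [pow_succ]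
        exact Ideal.mul_mem_mul hb haI
      calc b * (a * x) = b * a * x := by ring
        _ = 0 := h _ hba

/-- symmetry identity for linear maps on an ideal: `g w * c = w * g c` for `w, c ∈ I`. -/
private lemma trace_symm {A : Type u} [CommRing A] {I : Ideal A} (g : ↥I →ₗ[A] A)
    (w : ↥I) {c : A} (hc : c ∈ I) : g w * c = w.1 * g ⟨c, hc⟩ := by
  have h1 : g w * c = c • g w := by rw [smul_eq_mul, mul_comm]
  have h2 : c • w = w.1 • (⟨c, hc⟩ : ↥I) := Subtype.ext (by simp [mul_comm])
  rw [h1, ← map_smul, h2, map_smul, smul_eq_mul]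

/-- if an ideal consists of zerodivisors in a Noetherian ring, it has a nonzero annihilator. -/
private lemma exists_ann_of_zerodivisors {A : Type u} [CommRing A] [IsNoetherianRing A]
    (I : Ideal A) (hI : ∀ a ∈ I, ∃ z : A, z ≠ 0 ∧ z * a = 0) :
    ∃ z : A, z ≠ 0 ∧ ∀ a ∈ I, a * z = 0 := by
  classical
  obtain ⟨t, htinf, htprim, -, htmin⟩ := Ideal.IsLasker.minimal (Ideal.isLasker A A) ⊥
  -- every element of I lies in the radical of some member of t
  have hsub : (I : Set A) ⊆ ⋃ J ∈ (t : Set (Ideal A)), ((Ideal.radical J : Ideal A) : Set A) := by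
    intro a ha
    obtain ⟨z, hz0, hz⟩ := hI a ha
    have hznot : ¬ z ∈ t.inf id := by
      rw [htinf]
      simpa using hz0
    rw [Submodule.mem_finsetInf] at hznot
    push_neg at hznot
    obtain ⟨J, hJt, hzJ⟩ := hznot
    have hprim := htprim hJt
    have hmul : z * a ∈ J := by
      have : z * a ∈ (⊥ : Ideal A) := by rw [hz]; exact Submodule.zero_mem ⊥
      rw [← htinf] at this
      rw [Submodule.mem_finsetInf] at this
      simpa using this J hJt
    have : a ∈ Ideal.radical J :=
      ((Ideal.isPrimary_iff.mp hprim).2 hmul).resolve_left (by simpa using hzJ)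
    exact Set.mem_biUnion hJt this
  -- prime avoidance
  have hp : ∀ J ∈ t, J ≠ ⊤ → J ≠ ⊤ → (Ideal.radical J).IsPrime := fun J hJ _ _ =>
    Ideal.isPrime_radical (htprim hJ)
  obtain ⟨Q, hQt, hIQ⟩ := (Ideal.subset_union_prime (f := fun J : Ideal A => J.radical)
    ⊤ ⊤ hp).mp hsub
  -- minimality gives x in all other components but not Q
  have := htmin hQt
  rw [SetLike.not_le_iff_exists] at this
  obtain ⟨x, hx1, hx2⟩ := this
  have hx0 : x ≠ 0 := fun h => hx2 (h ▸ Q.zero_mem)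
  -- I^n ≤ Q
  obtain ⟨n, hn⟩ := Ideal.exists_pow_le_of_le_radical_of_fg hIQ (IsNoetherian.noetherian I)
  -- I^n * x = 0
  refine descend_ann I n x hx0 fun a ha => ?_
  have : a * x ∈ t.inf id := by
    rw [Submodule.mem_finsetInf]
    intro J hJ
    by_cases hJQ : J = Q
    · subst hJQ
      exact Ideal.mul_mem_right x J (hn ha)
    · have : x ∈ J := by
        rw [Submodule.mem_finsetInf] at hx1
        exact hx1 J (Finset.mem_erase.mpr ⟨hJQ, hJ⟩)
      exact Ideal.mul_mem_left J a this
  rw [htinf] at this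
  simpa using this

end Aux

open Pointwise RingTheory.Sequence in
/-- if `I` is a reflexive ideal of a commutative Noetherian ring `A` with
`grade_A(tr_A(I)) ≥ 2`, then `I` contains a nonzerodivisor and `(I : I) = A`. -/
theorem regular_and_colon_self_of_grade_traceIdeal_ge_two (A : Type u) [CommRing A]
    [IsNoetherianRing A] (I : Ideal A) (hrefl : Module.IsReflexive A I)
    (hgrade : 2 ≤ (traceIdeal A I).grade) :
    (∃ a ∈ I, a ∈ nonZeroDivisors A) ∧ I.toFrac / I.toFrac = 1 := by
  classical
  -- extract a regular sequence of length ≥ 2 inside the trace ideal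
  obtain ⟨rs, hmem, hreg, hlen⟩ : ∃ rs : List A, (∀ x ∈ rs, x ∈ traceIdeal A I) ∧
      RingTheory.Sequence.IsWeaklyRegular A rs ∧ 2 ≤ rs.length := by
    by_contra hcon
    push_neg at hcon
    have hle : (traceIdeal A I).grade ≤ 1 := by
      apply sSup_le
      rintro n ⟨rs, rfl, hmem, hreg⟩
      have := hcon rs hmem hreg
      exact_mod_cast Nat.lt_succ_iff.mp this
    have h21 : (2 : ℕ∞) ≤ 1 := le_trans hgrade hle
    norm_num at h21
  obtain ⟨r, s, rest, rfl⟩ : ∃ r s rest, rs = r :: s :: rest := by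
    match rs, hlen with
    | r :: s :: rest, _ => exact ⟨r, s, rest, rfl⟩
  rw [isWeaklyRegular_cons_iff] at hreg
  obtain ⟨hr, hreg⟩ := hreg
  rw [isWeaklyRegular_cons_iff] at hreg
  obtain ⟨hs, -⟩ := hreg
  have hrmem : r ∈ traceIdeal A I := hmem r (by simp)
  have hsmem : s ∈ traceIdeal A I := hmem s (by simp)
  have hrnzd : r ∈ nonZeroDivisors A := by
    rw [mem_nonZeroDivisors_iff_right]
    intro z hz
    exact hr (show r • z = r • 0 by simpa [mul_comm] using hz)
  -- part 1 : I contains a nonzerodivisor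
  have part1 : ∃ a ∈ I, a ∈ nonZeroDivisors A := by
    by_contra hno
    push_neg at hno
    have hzd : ∀ a ∈ I, ∃ z : A, z ≠ 0 ∧ z * a = 0 := by
      intro a ha
      have := hno a ha
      rw [mem_nonZeroDivisors_iff_right] at this
      push_neg at this
      obtain ⟨z, hz1, hz2⟩ := this
      exact ⟨z, hz2, hz1⟩
    obtain ⟨z, hz0, hz⟩ := exists_ann_of_zerodivisors I hzd
    have hann : r * z = 0 := by
      refine Submodule.iSup_induction (motive := fun t => t * z = 0)
        (fun f : ↥I →ₗ[A] A => LinearMap.range f) hrmem ?_ (by simp) ?_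
      · rintro f t ⟨y, rfl⟩
        have hy : z • y = 0 := Subtype.ext (by simpa [mul_comm] using hz y.1 y.2)
        calc f y * z = z • f y := by rw [smul_eq_mul, mul_comm]
          _ = f (z • y) := (map_smul f z y).symm
          _ = 0 := by rw [hy, map_zero]
      · intro a b ha hb
        rw [add_mul, ha, hb, add_zero]
    exact hz0 ((mem_nonZeroDivisors_iff_right.mp hrnzd) z (by rwa [mul_comm] at hann))
  obtain ⟨b, hbI, hbnzd⟩ := part1
  refine ⟨⟨b, hbI, hbnzd⟩, ?_⟩
  -- part 2 : (I : I) = A inside the total fraction ring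
  apply le_antisymm
  · intro x hx
    rw [Submodule.mem_div_iff_forall_mul_mem] at hx
    -- step A : multiples of trace ideal elements by x land in the image of A
    have stepA : ∀ a ∈ traceIdeal A I, ∃ c : A,
        x * algebraMap A (FractionRing A) a = algebraMap A (FractionRing A) c := by
      intro a ha
      refine Submodule.iSup_induction
        (motive := fun a => ∃ c : A,
          x * algebraMap A (FractionRing A) a = algebraMap A (FractionRing A) c)
        (fun f : ↥I →ₗ[A] A => LinearMap.range f) ha ?_ ⟨0, by simp⟩ ?_
      · rintro f t ⟨y, rfl⟩
        have hyF : x * algebraMap A (FractionRing A) y.1 ∈ I.toFrac := by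
          refine hx _ (Submodule.mem_map.mpr ⟨y.1, y.2, rfl⟩)
        obtain ⟨j, hjI, hj⟩ := Submodule.mem_map.mp hyF
        refine ⟨f ⟨j, hjI⟩, ?_⟩
        have hbu : IsUnit (algebraMap A (FractionRing A) b) :=
          IsLocalization.map_units (FractionRing A) ⟨b, hbnzd⟩
        apply hbu.mul_right_cancel
        have e1 : f y * b = y.1 * f ⟨b, hbI⟩ := trace_symm f y hbI
        have e2 : f ⟨j, hjI⟩ * b = j * f ⟨b, hbI⟩ := trace_symm f ⟨j, hjI⟩ hbI
        have hj' : algebraMap A (FractionRing A) j = x * algebraMap A (FractionRing A) y.1 := hj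
        calc x * algebraMap A (FractionRing A) (f y) * algebraMap A (FractionRing A) b
            = x * algebraMap A (FractionRing A) (f y * b) := by rw [map_mul]; ring
          _ = x * algebraMap A (FractionRing A) y.1
              * algebraMap A (FractionRing A) (f ⟨b, hbI⟩) := by rw [e1, map_mul]; ring
          _ = algebraMap A (FractionRing A) (j * f ⟨b, hbI⟩) := by rw [map_mul, hj']
          _ = algebraMap A (FractionRing A) (f ⟨j, hjI⟩)
              * algebraMap A (FractionRing A) b := by rw [← e2, map_mul]
      · rintro a₁ a₂ ⟨c₁, hc₁⟩ ⟨c₂, hc₂⟩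
        exact ⟨c₁ + c₂, by rw [map_add, map_add, mul_add, hc₁, hc₂]⟩
    obtain ⟨u, hu⟩ := stepA r hrmem
    obtain ⟨v, hv⟩ := stepA s hsmem
    have huv : s * u = r * v := by
      apply IsFractionRing.injective A (FractionRing A)
      rw [map_mul, map_mul, ← hu, ← hv]
      ring
    -- use regularity of s on A/(r) to conclude u ∈ (r)
    have humem : u ∈ (r • ⊤ : Submodule A A) := by
      refine (isSMulRegular_quotient_iff_mem_of_smul_mem
        (r • ⊤ : Submodule A A) s).mp hs u ?_
      have : s • u = r • v := by simpa using huv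
      rw [this]
      exact Submodule.smul_mem_pointwise_smul v r ⊤ Submodule.mem_top
    rw [← SetLike.mem_coe, Submodule.coe_pointwise_smul] at humem
    obtain ⟨w, -, hw⟩ := Set.mem_smul_set.mp humem
    have hru : IsUnit (algebraMap A (FractionRing A) r) :=
      IsLocalization.map_units (FractionRing A) ⟨r, hrnzd⟩
    have hxw : x = algebraMap A (FractionRing A) w := by
      apply hru.mul_right_cancel
      rw [hu, ← hw]
      simp only [smul_eq_mul, map_mul]
      ring
    exact Submodule.mem_one.mpr ⟨w, hxw.symm⟩
  · rw [Submodule.le_div_iff_mul_le, one_mul]
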